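/- Let q be a field element setting: for c₁, c₂ in F_q*, the quartic polynomial L(b) = b⁴ + 2(c₁−c₂−1)b³ + ((1+c₁−c₂)² − 6c₁)b² + 2c₁(1−c₁−c₂)b + c₁² over F_q (q odd) is the square of a monic quadratic polynomial (b² + α₁b + α₀)² for some α₁, α₀ ∈ F_q if and only if (c₁, c₂) = (1, −1), in which case L(b) = (b² + b + 1)². -/
import Mathlib

open Polynomial

/-- The quartic `L(b) = b⁴ + 2(c₁−c₂−1)b³ + ((1+c₁−c₂)² − 6c₁)b² + 2c₁(1−c₁−c₂)b + c₁²`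
over `F_q` (`q` odd) is the square of a monic quadratic iff `(c₁,c₂) = (1,−1)`, in which
case `L(b) = (b² + b + 1)²`. -/
theorem stmt_18 (p k q : ℕ) (hp : Nat.Prime p) (hk : 0 < k) (hq : q = p ^ k)
    (hodd : Odd q)
    (K : Type) [Field K] [Fintype K] (hK : Fintype.card K = q)
    (c₁ c₂ : K) (hc₁ : c₁ ≠ 0) (hc₂ : c₂ ≠ 0)
    (f : Polynomial K)
    (hf : f = Polynomial.X ^ 4 + Polynomial.C (2 * (c₁ - c₂ - 1)) * Polynomial.X ^ 3
            + Polynomial.C ((1 + c₁ - c₂) ^ 2 - 6 * c₁) * Polynomial.X ^ 2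
            + Polynomial.C (2 * c₁ * (1 - c₁ - c₂)) * Polynomial.X
            + Polynomial.C (c₁ ^ 2)) :
    ((∃ α₁ α₀ : K,
        f = (Polynomial.X ^ 2 + Polynomial.C α₁ * Polynomial.X + Polynomial.C α₀) ^ 2)
      ↔ (c₁ = 1 ∧ c₂ = -1))
    ∧ (c₁ = 1 → c₂ = -1 →
        f = (Polynomial.X ^ 2 + Polynomial.X + 1) ^ 2) := by
  have two_ne : (2:K) ≠ 0 := by
    intro h
    obtain ⟨n, hprime, hcard⟩ := FiniteField.card K (ringChar K)
    have h2 : ringChar K ∣ 2 := (ringChar.spec K 2).mp (by exact_mod_cast h)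
    have hr2 : ringChar K = 2 := (Nat.prime_dvd_prime_iff_eq hprime Nat.prime_two).mp h2
    rw [hK] at hcard
    rw [hcard, hr2] at hodd
    exact absurd (Nat.even_pow.mpr ⟨even_two, n.pos.ne'⟩) (Nat.not_even_iff_odd.mpr hodd)
  have hlast : c₁ = 1 → c₂ = -1 → f = (X ^ 2 + X + 1) ^ 2 := by
    intro h1 h2
    subst h1 h2 hf
    norm_num
    simp only [map_ofNat]
    ring
  refine ⟨⟨?_, fun ⟨h1, h2⟩ => ⟨1, 1, by rw [hlast h1 h2]; norm_num⟩⟩, hlast⟩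
  rintro ⟨α₁, α₀, h⟩
  rw [hf] at h
  have hexp : (X ^ 2 + C α₁ * X + C α₀ : K[X]) ^ 2
      = X ^ 4 + C (2 * α₁) * X ^ 3 + C (α₁ ^ 2 + 2 * α₀) * X ^ 2
        + C (2 * α₁ * α₀) * X + C (α₀ ^ 2) := by
    simp only [C_mul, C_add, C_pow, map_ofNat]
    ring
  rw [hexp] at h
  have e3 := congrArg (fun g => Polynomial.coeff g 3) h
  have e2 := congrArg (fun g => Polynomial.coeff g 2) h
  have e1 := congrArg (fun g => Polynomial.coeff g 1) h
  have e0 := congrArg (fun g => Polynomial.coeff g 0) h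
  simp only [coeff_add, coeff_C_mul, coeff_X_pow, coeff_X, coeff_C] at e3 e2 e1 e0
  norm_num at e3 e2 e1 e0
  have hα₁ : α₁ = c₁ - c₂ - 1 := (e3.resolve_right two_ne).symm
  subst hα₁
  have hα₀ : α₀ = -c₁ - 2 * c₂ := by
    apply mul_left_cancel₀ two_ne; linear_combination - e2
  subst hα₀
  have h4 : (2:K) * (2 * (c₂ * (c₂ + c₁))) = 0 := by linear_combination - e0
  have hc2 : c₂ = -c₁ := by
    have h5 := (mul_eq_zero.mp ((mul_eq_zero.mp h4).resolve_left two_ne)).resolve_left two_ne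
    have h6 := (mul_eq_zero.mp h5).resolve_left hc₂
    linear_combination h6
  subst hc2
  have h7 : (2:K) * (2 * (c₁ * (c₁ - 1))) = 0 := by linear_combination - e1
  have h8 := (mul_eq_zero.mp ((mul_eq_zero.mp h7).resolve_left two_ne)).resolve_left two_ne
  have h9 := (mul_eq_zero.mp h8).resolve_left hc₁
  constructor
  · linear_combination h9
  · linear_combination - h9
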